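/- Consider the demographic-disparity model: Y1 ∈ {0, 1} is a binary decision and Y0 ∈ {a_1, …, a_J} is a protected attribute with J classes. Let X be a standard Borel space, μ_X a probability measure on X, κ1 a kernel from X to probability measures on {0,1}, κ0 a kernel from X to probability measures on {a_1, …, a_J}, and let μ1X and μ0X be the induced joint laws on {0,1} × X and {a_1, …, a_J} × X. Then for θ = (θ_1, …, θ_J) ∈ [0,1]^J, there exists μ ∈ M(μ1X, μ0X) with θ_j · μ({(y1, y0, x) : y0 = a_j}) = μ({(y1, y0, x) : y1 = 1, y0 = a_j}) for every j = 1, …, J, if and only if for every t = (t_1, …, t_J) in the unit sphere of ℝ^J: Σ_{j=1}^J t_j θ_j μ0X({a_j} × X) ≤ ∫_X ∫₀¹ F⁻¹_{β(x)}(u) · F⁻¹_{δ_t(x)}(u) du dμ_X(x), where β(x) is the law on ℝ of the indicator 1{y1 = 1} under κ1(x), and δ_t(x) is the pushforward of κ0(x) under a_j ↦ t_j (Proposition 5: the identified set for the within-class approval probabilities). -/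

import Mathlib

open MeasureTheory ProbabilityTheory
open scoped RealInnerProductSpace

/-- The set `M(μ1X, μ0X)` of probability measures on `Y1 × Y0 × X` whose projection on
`(Y1, X)` is `μ1X` and whose projection on `(Y0, X)` is `μ0X`. -/
def MSet {Y1 Y0 X : Type*} [MeasurableSpace Y1] [MeasurableSpace Y0] [MeasurableSpace X]
    (μ1X : Measure (Y1 × X)) (μ0X : Measure (Y0 × X)) :
    Set (Measure (Y1 × Y0 × X)) :=
  {μ | IsProbabilityMeasure μ ∧
    μ.map (fun p => (p.1, p.2.2)) = μ1X ∧ μ.map (fun p => (p.2.1, p.2.2)) = μ0X}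

/-- The quantile function of a probability measure `ν` on `ℝ`:
`F_ν⁻¹(u) = inf {y : F_ν(y) ≥ u}` where `F_ν(y) = ν((-∞, y])`. -/
noncomputable def quantile (ν : Measure ℝ) (u : ℝ) : ℝ :=
  sInf {y : ℝ | u ≤ (ν (Set.Iic y)).toReal}

section Aux
namespace DD

variable {J : ℕ}

/-- cumulative sums of `q ∘ τ` -/
noncomputable def Cq (q : Fin J → ℝ) (τ : Equiv.Perm (Fin J)) (k : ℕ) : ℝ :=
  ∑ i ∈ Finset.univ.filter (fun i : Fin J => (i : ℕ) < k), q (τ i)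

noncomputable def Mq (q : Fin J → ℝ) (τ : Equiv.Perm (Fin J)) (p : ℝ) (k : ℕ) : ℝ :=
  max (1 - p) (Cq q τ k)

noncomputable def tn (t : Fin J → ℝ) (τ : Equiv.Perm (Fin J)) (k : ℕ) : ℝ :=
  if h : k < J then t (τ ⟨k, h⟩) else 0

lemma Cq_zero (q : Fin J → ℝ) (τ : Equiv.Perm (Fin J)) : Cq q τ 0 = 0 := by
  simp [Cq]

lemma Cq_succ (q : Fin J → ℝ) (τ : Equiv.Perm (Fin J)) {k : ℕ} (h : k < J) :
    Cq q τ (k + 1) = Cq q τ k + q (τ ⟨k, h⟩) := by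
  unfold Cq
  rw [show (Finset.univ.filter (fun i : Fin J => (i : ℕ) < k + 1))
      = insert (⟨k, h⟩ : Fin J) (Finset.univ.filter (fun i : Fin J => (i : ℕ) < k)) by
    ext i; simp [Nat.lt_succ_iff_lt_or_eq, Fin.ext_iff, or_comm]; omega]
  rw [Finset.sum_insert (by simp)]
  ring

lemma Cq_stab (q : Fin J → ℝ) (τ : Equiv.Perm (Fin J)) {k : ℕ} (h : J ≤ k) :
    Cq q τ k = Cq q τ J := by
  unfold Cq
  congr 1
  ext i
  simp only [Finset.mem_filter]
  exact ⟨fun _ => by simp [i.isLt], fun _ => by simp; omega⟩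

lemma Cq_J (q : Fin J → ℝ) (τ : Equiv.Perm (Fin J)) : Cq q τ J = ∑ j, q j := by
  unfold Cq
  rw [show (Finset.univ.filter (fun i : Fin J => (i : ℕ) < J)) = Finset.univ by
    ext i; simp [i.isLt]]
  exact Equiv.sum_comp τ q

lemma Cq_mono (q : Fin J → ℝ) (τ : Equiv.Perm (Fin J)) (hq : ∀ j, 0 ≤ q j) :
    Monotone (Cq q τ) := by
  intro k k' hk
  exact Finset.sum_le_sum_of_subset_of_nonneg
    (fun i hi => by simp at hi ⊢; omega) (fun i _ _ => hq _)

lemma Cq_nonneg (q : Fin J → ℝ) (τ : Equiv.Perm (Fin J)) (hq : ∀ j, 0 ≤ q j) (k : ℕ) :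
    0 ≤ Cq q τ k := by
  rw [← Cq_zero q τ]; exact Cq_mono q τ hq (Nat.zero_le k)

lemma Cq_sub (q r : Fin J → ℝ) (τ : Equiv.Perm (Fin J)) (k : ℕ) :
    Cq (fun j => q j - r j) τ k = Cq q τ k - Cq r τ k := by
  simp [Cq, Finset.sum_sub_distrib]

lemma abel_nonneg (N : ℕ) (c D : ℕ → ℝ) (hc : ∀ k, c k ≤ c (k + 1)) (hD : ∀ k, D k ≤ 0)
    (hD0 : D 0 = 0) (hDN : D N = 0) :
    0 ≤ ∑ k ∈ Finset.range N, c k * (D (k + 1) - D k) := by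
  have key : ∀ n, c n * D n ≤ ∑ k ∈ Finset.range n, c k * (D (k + 1) - D k) := by
    intro n
    induction n with
    | zero => simp [hD0]
    | succ n ih =>
      rw [Finset.sum_range_succ]
      have h1 : c (n + 1) * D (n + 1) ≤ c n * D (n + 1) :=
        mul_le_mul_of_nonpos_right (hc n) (hD (n + 1))
      have h2 : c n * (D (n + 1) - D n) = c n * D (n + 1) - c n * D n := by ring
      linarith
  have := key N
  rw [hDN, mul_zero] at this
  exact this

lemma tn_mono (t : Fin J → ℝ) (τ : Equiv.Perm (Fin J)) (hmono : Monotone (t ∘ τ))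
    {k k' : ℕ} (hkk : k ≤ k') (hk' : k' < J) : tn t τ k ≤ tn t τ k' := by
  unfold tn
  rw [dif_pos (lt_of_le_of_lt hkk hk'), dif_pos hk']
  exact hmono (by simp [Fin.le_def]; omega)

/-- reindexing: `∑_j t j * r j = ∑_{k < J} tn k * (Cq r (k+1) - Cq r k)` -/
lemma sum_reindex (t r : Fin J → ℝ) (τ : Equiv.Perm (Fin J)) :
    ∑ j, t j * r j = ∑ k ∈ Finset.range J, tn t τ k * (Cq r τ (k + 1) - Cq r τ k) := by
  rw [← Equiv.sum_comp τ (fun j => t j * r j)]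
  rw [← Fin.sum_univ_eq_sum_range (fun k => tn t τ k * (Cq r τ (k + 1) - Cq r τ k)) J]
  refine Finset.sum_congr rfl (fun i _ => ?_)
  rw [Cq_succ r τ i.isLt]
  unfold tn
  rw [dif_pos i.isLt]
  simp only [Fin.eta]
  ring

/-- The greedy LP bound. -/
lemma greedy_max (t q r : Fin J → ℝ) (τ : Equiv.Perm (Fin J)) (hmono : Monotone (t ∘ τ))
    (p : ℝ) (hp0 : 0 ≤ p) (hp1 : p ≤ 1) (hq0 : ∀ j, 0 ≤ q j) (hqs : ∑ j, q j = 1)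
    (hr0 : ∀ j, 0 ≤ r j) (hrq : ∀ j, r j ≤ q j) (hrs : ∑ j, r j = p) :
    ∑ j, t j * r j ≤ ∑ k ∈ Finset.range J, tn t τ k * (Mq q τ p (k + 1) - Mq q τ p k) := by
  rcases Nat.eq_zero_or_pos J with hJ | hJ
  · subst hJ; simp
  set c : ℕ → ℝ := fun k => tn t τ (min k (J - 1)) with hc_def
  set D : ℕ → ℝ := fun k => Mq q τ p (min k J) - (Cq r τ (min k J) + (1 - p)) with hD_def
  have hc : ∀ k, c k ≤ c (k + 1) := by
    intro k
    exact tn_mono t τ hmono (by omega) (by omega)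
  have hD : ∀ k, D k ≤ 0 := by
    intro k
    have h1 : 0 ≤ Cq r τ (min k J) := Cq_nonneg r τ hr0 _
    have h2 : Cq q τ (min k J) - Cq r τ (min k J) ≤ 1 - p := by
      rw [← Cq_sub]
      have := Cq_mono (fun j => q j - r j) τ (fun j => by simpa using sub_nonneg.mpr (hrq j)) (min_le_right k J)
      rw [Cq_J] at this
      have hs : ∑ j, (q j - r j) = 1 - p := by rw [Finset.sum_sub_distrib, hqs, hrs]
      linarith
    simp only [hD_def, Mq, sub_nonpos, max_le_iff]
    constructor <;> linarith
  have hD0 : D 0 = 0 := by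
    simp [hD_def, Mq, Cq_zero, max_eq_left (by linarith : (0:ℝ) ≤ 1 - p)]
  have hDN : D J = 0 := by
    simp only [hD_def, min_self, Mq, Cq_J, hqs, hrs]
    rw [max_eq_right (by linarith)]
    ring
  have habel := abel_nonneg J c D hc hD hD0 hDN
  have hsum : ∀ k ∈ Finset.range J, c k * (D (k + 1) - D k)
      = tn t τ k * (Mq q τ p (k + 1) - Mq q τ p k)
        - tn t τ k * (Cq r τ (k + 1) - Cq r τ k) := by
    intro k hk
    rw [Finset.mem_range] at hk
    have h1 : min k (J - 1) = k := by omega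
    have h2 : min k J = k := by omega
    have h3 : min (k + 1) J = k + 1 := by omega
    simp only [hc_def, hD_def, h1, h2, h3]
    ring
  rw [Finset.sum_congr rfl hsum, Finset.sum_sub_distrib] at habel
  rw [sum_reindex t r τ]
  linarith

open scoped Classical

lemma quantile_eq_of (ν : Measure ℝ) (u y₀ : ℝ) (h₁ : u ≤ (ν (Set.Iic y₀)).toReal)
    (h₂ : ∀ y, u ≤ (ν (Set.Iic y)).toReal → y₀ ≤ y) : quantile ν u = y₀ :=
  le_antisymm (csInf_le ⟨y₀, fun _ hy => h₂ _ hy⟩ h₁) (le_csInf ⟨y₀, h₁⟩ h₂)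

/-- the indicator function of approval -/
noncomputable def ind : Fin 2 → ℝ := fun y1 => if y1 = 1 then (1 : ℝ) else 0

lemma measurable_ind : Measurable ind := measurable_of_countable _

/-- measure of a set in a finite discrete space as a sum -/
lemma meas_fin_set {n : ℕ} (m : Measure (Fin n)) (S : Set (Fin n)) :
    m S = ∑ j ∈ Finset.univ.filter (· ∈ S), m {j} := by
  classical
  have h : S = ⋃ j ∈ Finset.univ.filter (· ∈ S), ({j} : Set (Fin n)) := by
    ext x; simp
  calc m S = m (⋃ j ∈ Finset.univ.filter (· ∈ S), ({j} : Set (Fin n))) := by rw [← h]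
    _ = ∑ j ∈ Finset.univ.filter (· ∈ S), m {j} :=
        measure_biUnion_finset (fun a _ b _ hab => by simp [Set.disjoint_singleton, hab])
          (fun _ _ => measurableSet_singleton _)

lemma meas_fin_set_toReal {n : ℕ} (m : Measure (Fin n)) [IsFiniteMeasure m] (S : Set (Fin n)) :
    (m S).toReal = ∑ j ∈ Finset.univ.filter (· ∈ S), (m {j}).toReal := by
  rw [meas_fin_set m S, ENNReal.toReal_sum (fun j _ => measure_ne_top m _)]

lemma toReal_prob_le_one {n : ℕ} (m : Measure (Fin n)) [IsProbabilityMeasure m]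
    (S : Set (Fin n)) : (m S).toReal ≤ 1 :=
  ENNReal.toReal_le_of_le_ofReal zero_le_one (by simpa using prob_le_one)

lemma sum_toReal_singleton {n : ℕ} (m : Measure (Fin n)) [IsProbabilityMeasure m] :
    ∑ j, (m {j}).toReal = 1 := by
  have h := meas_fin_set_toReal m Set.univ
  simp only [Set.mem_univ, measure_univ, ENNReal.toReal_one, Finset.filter_true] at h
  rw [← h]

section Fin2

variable (m1 : Measure (Fin 2)) [IsProbabilityMeasure m1]

lemma fin2_compl : ({(1 : Fin 2)} : Set (Fin 2))ᶜ = {0} := by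
  ext x; fin_cases x <;> simp

lemma m1_zero : m1 {0} = 1 - m1 {1} := by
  rw [← fin2_compl, prob_compl_eq_one_sub (measurableSet_singleton _)]

lemma m1_zero_toReal : (m1 {0}).toReal = 1 - (m1 {1}).toReal := by
  rw [m1_zero, ENNReal.toReal_sub_of_le prob_le_one (by simp)]
  simp

/-- cdf of the indicator pushforward -/
lemma F1_apply (y : ℝ) : (m1.map ind) (Set.Iic y) =
    if 1 ≤ y then 1 else if 0 ≤ y then m1 {0} else 0 := by
  rw [Measure.map_apply measurable_ind measurableSet_Iic]
  rcases le_or_gt 1 y with h1 | h1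
  · rw [if_pos h1]
    have : ind ⁻¹' Set.Iic y = Set.univ := by
      ext y1; simp only [Set.mem_preimage, Set.mem_Iic, Set.mem_univ, iff_true, ind]
      split <;> linarith
    rw [this]; simp
  · rw [if_neg (not_le.mpr h1)]
    rcases le_or_gt 0 y with h0 | h0
    · rw [if_pos h0]
      congr 1
      ext y1
      simp only [Set.mem_preimage, Set.mem_Iic, Set.mem_singleton_iff, ind]
      constructor
      · intro h
        by_contra hy1
        have : y1 = 1 := by omega
        rw [if_pos this] at h; linarith
      · intro h
        rw [h]; simpa using h0
    · rw [if_neg (not_le.mpr h0)]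
      have : ind ⁻¹' Set.Iic y = ∅ := by
        ext y1; simp only [Set.mem_preimage, Set.mem_Iic, Set.mem_empty_iff_false, iff_false,
          not_le, ind]
        split <;> linarith
      rw [this]; simp

lemma quantile1_low {u : ℝ} (hu0 : 0 < u) (hu : u ≤ 1 - (m1 {1}).toReal) :
    quantile (m1.map ind) u = 0 := by
  apply quantile_eq_of
  · rw [F1_apply m1 0]
    norm_num
    rw [m1_zero_toReal m1]
    exact hu
  · intro y hy
    by_contra hneg
    push_neg at hneg
    rw [F1_apply m1 y, if_neg (by linarith), if_neg (by linarith)] at hy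
    simp at hy
    linarith
lemma quantile1_high {u : ℝ} (hu1 : u ≤ 1) (hu : 1 - (m1 {1}).toReal < u) :
    quantile (m1.map ind) u = 1 := by
  apply quantile_eq_of
  · rw [F1_apply m1 1, if_pos le_rfl]
    simpa using hu1
  · intro y hy
    by_contra hneg
    push_neg at hneg
    rw [F1_apply m1 y, if_neg (by linarith)] at hy
    rcases le_or_gt 0 y with h0 | h0
    · rw [if_pos h0] at hy
      rw [m1_zero_toReal m1] at hy
      linarith
    · rw [if_neg (not_le.mpr h0)] at hy
      simp at hy
      have := toReal_prob_le_one m1 {1}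
      linarith

end Fin2

section FinJ

variable {J : ℕ} (m0 : Measure (Fin J)) [IsProbabilityMeasure m0] (t : Fin J → ℝ)
  (τ : Equiv.Perm (Fin J))

lemma F0_apply (y : ℝ) (ht : Measurable t) :
    ((m0.map t) (Set.Iic y)).toReal = ∑ j ∈ Finset.univ.filter (fun j => t j ≤ y), (m0 {j}).toReal := by
  rw [Measure.map_apply ht measurableSet_Iic, meas_fin_set_toReal]
  rfl

/-- reindexing a filtered sum along the permutation -/
lemma filter_sum_perm (P : Fin J → Prop) [DecidablePred P] (g : Fin J → ℝ) :
    ∑ j ∈ Finset.univ.filter P, g j = ∑ i ∈ Finset.univ.filter (fun i => P (τ i)), g (τ i) := by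
  rw [Finset.sum_filter, Finset.sum_filter, ← Equiv.sum_comp τ (fun j => if P j then g j else 0)]

lemma quantile0_eq (hmono : Monotone (t ∘ τ)) {k : ℕ} (hk : k < J) {u : ℝ}
    (hu1 : Cq (fun j => (m0 {j}).toReal) τ k < u)
    (hu2 : u ≤ Cq (fun j => (m0 {j}).toReal) τ (k + 1)) :
    quantile (m0.map t) u = t (τ ⟨k, hk⟩) := by
  have ht : Measurable t := measurable_of_countable _
  apply quantile_eq_of
  · rw [F0_apply m0 t _ ht]
    refine le_trans hu2 ?_
    unfold Cq
    rw [filter_sum_perm τ (fun j => t j ≤ t (τ ⟨k, hk⟩)) (fun j => (m0 {j}).toReal)]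
    apply Finset.sum_le_sum_of_subset_of_nonneg
    · intro i hi
      simp only [Finset.mem_filter, Finset.mem_univ, true_and] at hi ⊢
      exact hmono (by simp [Fin.le_def]; omega)
    · exact fun _ _ _ => ENNReal.toReal_nonneg
  · intro y hy
    by_contra hneg
    push_neg at hneg
    rw [F0_apply m0 t _ ht] at hy
    have hle : ∑ j ∈ Finset.univ.filter (fun j => t j ≤ y), (m0 {j}).toReal
        ≤ Cq (fun j => (m0 {j}).toReal) τ k := by
      unfold Cq
      rw [filter_sum_perm τ (fun j => t j ≤ y) (fun j => (m0 {j}).toReal)]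
      apply Finset.sum_le_sum_of_subset_of_nonneg
      · intro i hi
        simp only [Finset.mem_filter, Finset.mem_univ, true_and] at hi ⊢
        by_contra hik
        have : t (τ ⟨k, hk⟩) ≤ t (τ i) := hmono (by simp [Fin.le_def]; omega)
        linarith
      · exact fun _ _ _ => ENNReal.toReal_nonneg
    linarith

end FinJ

end DD

section InnerPart
open MeasureTheory ProbabilityTheory
namespace DD

lemma exists_cross (f : ℕ → ℝ) (u : ℝ) : ∀ N, f 0 < u → u ≤ f N →
    ∃ k < N, f k < u ∧ u ≤ f (k + 1) := by
  intro N
  induction N with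
  | zero => intro h0 hN; exact absurd (lt_of_lt_of_le h0 hN) (lt_irrefl _)
  | succ N ih =>
    intro h0 hN
    rcases le_or_gt u (f N) with h | h
    · obtain ⟨k, hk, h1, h2⟩ := ih h0 h
      exact ⟨k, by omega, h1, h2⟩
    · exact ⟨N, by omega, h, hN⟩

variable {J : ℕ} (m1 : Measure (Fin 2)) [IsProbabilityMeasure m1]
  (m0 : Measure (Fin J)) [IsProbabilityMeasure m0] (t : Fin J → ℝ) (τ : Equiv.Perm (Fin J))

/-- pointwise identity for the integrand on `(0,1)` -/
lemma integrand_eq (hmono : Monotone (t ∘ τ)) {u : ℝ} (hu : u ∈ Set.Ioo (0:ℝ) 1) :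
    quantile (m1.map ind) u * quantile (m0.map t) u =
      ∑ k ∈ Finset.range J, tn t τ k *
        Set.indicator (Set.Ioc (Mq (fun j => (m0 {j}).toReal) τ ((m1 {1}).toReal) k)
          (Mq (fun j => (m0 {j}).toReal) τ ((m1 {1}).toReal) (k + 1))) (fun _ => (1:ℝ)) u := by
  obtain ⟨hu0, hu1⟩ := hu
  set q : Fin J → ℝ := fun j => (m0 {j}).toReal with hq
  set p : ℝ := (m1 {1}).toReal with hp
  have hq0 : ∀ j, 0 ≤ q j := fun j => ENNReal.toReal_nonneg
  have hqs : ∑ j, q j = 1 := sum_toReal_singleton m0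
  have hp0 : 0 ≤ p := ENNReal.toReal_nonneg
  have hp1 : p ≤ 1 := toReal_prob_le_one m1 {1}
  have hM0 : Mq q τ p 0 = 1 - p := by
    simp [Mq, Cq_zero, max_eq_left (by linarith : (0:ℝ) ≤ 1 - p)]
  have hMJ : Mq q τ p J = 1 := by
    simp only [Mq, Cq_J, hqs]
    rw [max_eq_right (by linarith)]
  have hMmono : Monotone (fun k => Mq q τ p k) :=
    fun k k' hk => max_le_max le_rfl (Cq_mono q τ hq0 hk)
  rcases le_or_gt u (1 - p) with hcase | hcase
  · -- low quantile: everything is 0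
    rw [quantile1_low m1 hu0 hcase]
    rw [zero_mul]
    symm
    apply Finset.sum_eq_zero
    intro k _
    rw [Set.indicator_of_notMem, mul_zero]
    intro hmem
    have : 1 - p < u := lt_of_le_of_lt (le_max_left _ _) hmem.1
    linarith
  · -- high quantile
    rw [quantile1_high m1 (le_of_lt hu1) hcase, one_mul]
    obtain ⟨k₀, hk₀J, hlo, hhi⟩ := exists_cross (fun k => Mq q τ p k) u J
      (by simpa [hM0] using hcase) (by simpa [hMJ] using le_of_lt hu1)
    have hClo : Cq q τ k₀ < u := lt_of_le_of_lt (le_max_right _ _) hlo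
    have hChi : u ≤ Cq q τ (k₀ + 1) := by
      rcases max_cases (1 - p) (Cq q τ (k₀ + 1)) with ⟨he, _⟩ | ⟨he, _⟩
      · rw [Mq, he] at hhi; linarith
      · rw [Mq, he] at hhi; exact hhi
    rw [quantile0_eq m0 t τ hmono hk₀J hClo hChi]
    rw [Finset.sum_eq_single_of_mem k₀ (Finset.mem_range.mpr hk₀J)]
    · rw [Set.indicator_of_mem (Set.mem_Ioc.mpr ⟨hlo, hhi⟩), mul_one, tn, dif_pos hk₀J]
    · intro k hk hne
      rw [Set.indicator_of_notMem, mul_zero]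
      intro hmem
      rcases lt_or_gt_of_ne hne with h | h
      · have : Mq q τ p (k + 1) ≤ Mq q τ p k₀ := hMmono (by omega)
        have := hmem.2
        linarith
      · have : Mq q τ p (k₀ + 1) ≤ Mq q τ p k := hMmono (by omega)
        have := hmem.1
        linarith

lemma vol_inter {m m' : ℝ} (h0 : 0 ≤ m) (hmm : m ≤ m') (h1 : m' ≤ 1) :
    volume (Set.Ioo (0:ℝ) 1 ∩ Set.Ioc m m') = ENNReal.ofReal (m' - m) := by
  apply le_antisymm
  · calc volume (Set.Ioo (0:ℝ) 1 ∩ Set.Ioc m m') ≤ volume (Set.Ioc m m') :=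
          measure_mono Set.inter_subset_right
      _ = ENNReal.ofReal (m' - m) := Real.volume_Ioc
  · calc ENNReal.ofReal (m' - m) = volume (Set.Ioo m m') := Real.volume_Ioo.symm
      _ ≤ volume (Set.Ioo (0:ℝ) 1 ∩ Set.Ioc m m') := by
          apply measure_mono
          rintro x ⟨hx1, hx2⟩
          exact ⟨⟨lt_of_le_of_lt h0 hx1, lt_of_lt_of_le hx2 h1⟩, hx1, le_of_lt hx2⟩

/-- The inner integral over `(0,1)` equals the greedy sum. -/
lemma inner_integral_eq (hmono : Monotone (t ∘ τ)) :
    (∫ u in Set.Ioo (0:ℝ) 1, quantile (m1.map ind) u * quantile (m0.map t) u) =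
      ∑ k ∈ Finset.range J, tn t τ k *
        (Mq (fun j => (m0 {j}).toReal) τ ((m1 {1}).toReal) (k + 1) -
          Mq (fun j => (m0 {j}).toReal) τ ((m1 {1}).toReal) k) := by
  set q : Fin J → ℝ := fun j => (m0 {j}).toReal with hq
  set p : ℝ := (m1 {1}).toReal with hp
  have hq0 : ∀ j, 0 ≤ q j := fun j => ENNReal.toReal_nonneg
  have hqs : ∑ j, q j = 1 := sum_toReal_singleton m0
  have hp0 : 0 ≤ p := ENNReal.toReal_nonneg
  have hp1 : p ≤ 1 := toReal_prob_le_one m1 {1}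
  have hM0 : 1 - p ≤ Mq q τ p 0 := le_max_left _ _
  have hMJ : Mq q τ p J ≤ 1 := by
    simp only [Mq, Cq_J, hqs]
    rw [max_eq_right (by linarith)]
  have hMmono : Monotone (fun k => Mq q τ p k) :=
    fun k k' hk => max_le_max le_rfl (Cq_mono q τ hq0 hk)
  have hM_nonneg : ∀ k, 0 ≤ Mq q τ p k := fun k =>
    le_trans (by linarith) (le_trans hM0 (hMmono (Nat.zero_le k)))
  have hM_le_one : ∀ k ≤ J, Mq q τ p k ≤ 1 := fun k hk => le_trans (hMmono hk) hMJ
  rw [setIntegral_congr_fun measurableSet_Ioo (fun u hu => integrand_eq m1 m0 t τ hmono hu)]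
  rw [integral_finset_sum]
  · refine Finset.sum_congr rfl (fun k hk => ?_)
    rw [Finset.mem_range] at hk
    rw [integral_const_mul]
    congr 1
    rw [integral_indicator measurableSet_Ioc]
    rw [setIntegral_const]
    rw [measureReal_def, Measure.restrict_apply measurableSet_Ioc, Set.inter_comm]
    rw [vol_inter (hM_nonneg k) (hMmono (Nat.le_succ k)) (hM_le_one (k+1) (by omega))]
    rw [ENNReal.toReal_ofReal (by linarith [hMmono (Nat.le_succ k)])]
    rw [smul_eq_mul, mul_one]
  · intro k _
    apply Integrable.const_mul
    rw [integrable_indicator_iff measurableSet_Ioc]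
    apply (integrableOn_const_iff (C := (1:ℝ))).mpr
    right
    calc (volume.restrict (Set.Ioo (0:ℝ) 1)) (Set.Ioc _ _)
        ≤ (volume.restrict (Set.Ioo (0:ℝ) 1)) Set.univ := measure_mono (Set.subset_univ _)
      _ = volume (Set.Ioo (0:ℝ) 1) := by rw [Measure.restrict_apply_univ]
      _ < ⊤ := by rw [Real.volume_Ioo]; exact ENNReal.ofReal_lt_top

end DD
end InnerPart
section XLevel
open MeasureTheory ProbabilityTheory
namespace DD

variable {J : ℕ} {X : Type*} [MeasurableSpace X]

noncomputable def px (κ1 : Kernel X (Fin 2)) (x : X) : ℝ := ((κ1 x) {1}).toReal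

noncomputable def qx (κ0 : Kernel X (Fin J)) (j : Fin J) (x : X) : ℝ := ((κ0 x) {j}).toReal

noncomputable def vx (κ1 : Kernel X (Fin 2)) (κ0 : Kernel X (Fin J)) (τ : Equiv.Perm (Fin J))
    (j : Fin J) (x : X) : ℝ :=
  Mq (fun i => qx κ0 i x) τ (px κ1 x) ((τ.symm j : ℕ) + 1)
    - Mq (fun i => qx κ0 i x) τ (px κ1 x) (τ.symm j : ℕ)

variable (κ1 : Kernel X (Fin 2)) (κ0 : Kernel X (Fin J))

lemma measurable_px : Measurable (px κ1) :=
  (Kernel.measurable_coe κ1 (measurableSet_singleton 1)).ennreal_toReal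

lemma measurable_qx (j : Fin J) : Measurable (qx κ0 j) :=
  (Kernel.measurable_coe κ0 (measurableSet_singleton j)).ennreal_toReal

lemma measurable_Mqx (τ : Equiv.Perm (Fin J)) (k : ℕ) :
    Measurable (fun x => Mq (fun i => qx κ0 i x) τ (px κ1 x) k) := by
  apply Measurable.max
  · exact (measurable_px κ1).const_sub 1
  · exact Finset.measurable_sum _ (fun i _ => measurable_qx κ0 (τ i))

lemma measurable_vx (τ : Equiv.Perm (Fin J)) (j : Fin J) :
    Measurable (vx κ1 κ0 τ j) :=
  (measurable_Mqx κ1 κ0 τ _).sub (measurable_Mqx κ1 κ0 τ _)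

variable [IsMarkovKernel κ1] [IsMarkovKernel κ0]

lemma px_nonneg (x : X) : 0 ≤ px κ1 x := ENNReal.toReal_nonneg
lemma px_le_one (x : X) : px κ1 x ≤ 1 := toReal_prob_le_one (κ1 x) _
lemma qx_nonneg (j : Fin J) (x : X) : 0 ≤ qx κ0 j x := ENNReal.toReal_nonneg
lemma qx_le_one (j : Fin J) (x : X) : qx κ0 j x ≤ 1 := toReal_prob_le_one (κ0 x) _
lemma qx_sum (x : X) : ∑ j, qx κ0 j x = 1 := sum_toReal_singleton (κ0 x)

lemma max_sub_max_le (a b b' : ℝ) (h : b ≤ b') : max a b' - max a b ≤ b' - b := by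
  rcases max_cases a b' with ⟨h1, h2⟩ | ⟨h1, h2⟩ <;> rcases max_cases a b with ⟨h3, h4⟩ | ⟨h3, h4⟩ <;>
    simp [h1, h3] <;> linarith

lemma Mqx_mono (τ : Equiv.Perm (Fin J)) (x : X) :
    Monotone (fun k => Mq (fun i => qx κ0 i x) τ (px κ1 x) k) :=
  fun k k' hk => max_le_max le_rfl (Cq_mono _ τ (fun i => qx_nonneg κ0 i x) hk)

lemma vx_nonneg (τ : Equiv.Perm (Fin J)) (j : Fin J) (x : X) : 0 ≤ vx κ1 κ0 τ j x :=
  sub_nonneg.mpr (Mqx_mono κ1 κ0 τ x (Nat.le_succ _))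

lemma vx_le_qx (τ : Equiv.Perm (Fin J)) (j : Fin J) (x : X) :
    vx κ1 κ0 τ j x ≤ qx κ0 j x := by
  unfold vx Mq
  have h := Cq_succ (fun i => qx κ0 i x) τ (τ.symm j).isLt
  rw [Fin.eta] at h
  have := max_sub_max_le (1 - px κ1 x) (Cq (fun i => qx κ0 i x) τ (τ.symm j : ℕ))
    (Cq (fun i => qx κ0 i x) τ ((τ.symm j : ℕ) + 1))
    (Cq_mono _ τ (fun i => qx_nonneg κ0 i x) (Nat.le_succ _))
  rw [h] at this ⊢
  simpa [Equiv.apply_symm_apply] using this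

lemma vx_le_one (τ : Equiv.Perm (Fin J)) (j : Fin J) (x : X) : vx κ1 κ0 τ j x ≤ 1 :=
  le_trans (vx_le_qx κ1 κ0 τ j x) (qx_le_one κ0 j x)

lemma Mqx_zero (τ : Equiv.Perm (Fin J)) (x : X) :
    Mq (fun i => qx κ0 i x) τ (px κ1 x) 0 = 1 - px κ1 x := by
  rw [Mq, Cq_zero, max_eq_left (by linarith [px_le_one κ1 x])]

lemma Mqx_J (τ : Equiv.Perm (Fin J)) (x : X) :
    Mq (fun i => qx κ0 i x) τ (px κ1 x) J = 1 := by
  rw [Mq, Cq_J, qx_sum, max_eq_right (by linarith [px_nonneg κ1 x])]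

lemma vx_sum (τ : Equiv.Perm (Fin J)) (x : X) : ∑ j, vx κ1 κ0 τ j x = px κ1 x := by
  calc ∑ j, vx κ1 κ0 τ j x
      = ∑ i : Fin J, (Mq (fun i => qx κ0 i x) τ (px κ1 x) ((i : ℕ) + 1)
          - Mq (fun i => qx κ0 i x) τ (px κ1 x) (i : ℕ)) :=
        Equiv.sum_comp τ.symm (fun i : Fin J => Mq (fun i => qx κ0 i x) τ (px κ1 x) ((i : ℕ) + 1)
          - Mq (fun i => qx κ0 i x) τ (px κ1 x) (i : ℕ))
    _ = ∑ k ∈ Finset.range J, (Mq (fun i => qx κ0 i x) τ (px κ1 x) (k + 1)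
          - Mq (fun i => qx κ0 i x) τ (px κ1 x) k) :=
        Fin.sum_univ_eq_sum_range (fun k => Mq (fun i => qx κ0 i x) τ (px κ1 x) (k + 1)
          - Mq (fun i => qx κ0 i x) τ (px κ1 x) k) J
    _ = Mq (fun i => qx κ0 i x) τ (px κ1 x) J - Mq (fun i => qx κ0 i x) τ (px κ1 x) 0 :=
        Finset.sum_range_sub _ J
    _ = px κ1 x := by rw [Mqx_J, Mqx_zero]; ring

/-- the greedy sum as a `t`-weighted sum of the greedy selection -/
lemma G_eq (t : Fin J → ℝ) (τ : Equiv.Perm (Fin J)) (x : X) :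
    ∑ k ∈ Finset.range J, tn t τ k * (Mq (fun i => qx κ0 i x) τ (px κ1 x) (k + 1)
        - Mq (fun i => qx κ0 i x) τ (px κ1 x) k)
      = ∑ j, t j * vx κ1 κ0 τ j x := by
  rw [← Equiv.sum_comp τ (fun j => t j * vx κ1 κ0 τ j x),
    ← Fin.sum_univ_eq_sum_range (fun k => tn t τ k * (Mq (fun i => qx κ0 i x) τ (px κ1 x) (k + 1)
        - Mq (fun i => qx κ0 i x) τ (px κ1 x) k)) J]
  refine Finset.sum_congr rfl (fun i _ => ?_)
  rw [tn, dif_pos i.isLt]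
  simp only [Fin.eta, vx, Equiv.symm_apply_apply]

/-- pointwise value of the inner integral -/
lemma inner_eq_G (t : Fin J → ℝ) (τ : Equiv.Perm (Fin J)) (hmono : Monotone (t ∘ τ)) (x : X) :
    (∫ u in Set.Ioo (0:ℝ) 1,
      quantile ((κ1 x).map (fun y1 : Fin 2 => if y1 = 1 then (1:ℝ) else 0)) u *
        quantile ((κ0 x).map t) u) = ∑ j, t j * vx κ1 κ0 τ j x := by
  rw [show (fun y1 : Fin 2 => if y1 = 1 then (1:ℝ) else 0) = ind from rfl]
  rw [inner_integral_eq (κ1 x) (κ0 x) t τ hmono]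
  exact G_eq κ1 κ0 t τ x

lemma integrable_vx (μX : Measure X) [IsProbabilityMeasure μX] (τ : Equiv.Perm (Fin J))
    (j : Fin J) : Integrable (vx κ1 κ0 τ j) μX := by
  refine Integrable.mono' (integrable_const (1:ℝ)) (measurable_vx κ1 κ0 τ j).aestronglyMeasurable
    (Filter.Eventually.of_forall (fun x => ?_))
  rw [Real.norm_eq_abs, abs_le]
  exact ⟨by linarith [vx_nonneg κ1 κ0 τ j x], vx_le_one κ1 κ0 τ j x⟩

/-- the outer integral of the inner integral -/
lemma integral_inner_eq (μX : Measure X) [IsProbabilityMeasure μX] (t : Fin J → ℝ)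
    (τ : Equiv.Perm (Fin J)) (hmono : Monotone (t ∘ τ)) :
    (∫ x, (∫ u in Set.Ioo (0:ℝ) 1,
        quantile ((κ1 x).map (fun y1 : Fin 2 => if y1 = 1 then (1:ℝ) else 0)) u *
          quantile ((κ0 x).map t) u) ∂μX)
      = ∑ j, t j * ∫ x, vx κ1 κ0 τ j x ∂μX := by
  rw [integral_congr_ae (Filter.Eventually.of_forall (inner_eq_G κ1 κ0 t τ hmono))]
  rw [integral_finset_sum _ (fun j _ => (integrable_vx κ1 κ0 μX τ j).const_mul (t j))]
  exact Finset.sum_congr rfl (fun j _ => integral_const_mul _ _)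

end DD
end XLevel

section Plumbing
open MeasureTheory ProbabilityTheory
namespace DD

variable {n : ℕ} {X : Type*} [MeasurableSpace X]

lemma measure_prod_decomp (ν : Measure (Fin n × X)) {S : Set (Fin n × X)}
    (hS : MeasurableSet S) :
    ν S = ∑ b : Fin n, ν ({b} ×ˢ {x | (b, x) ∈ S}) := by
  have hdec : S = ⋃ b : Fin n, ({b} ×ˢ {x | (b, x) ∈ S}) := by
    ext ⟨b, x⟩
    simp only [Set.mem_iUnion, Set.mem_prod, Set.mem_singleton_iff, Set.mem_setOf_eq]
    constructor
    · intro h; exact ⟨b, rfl, h⟩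
    · rintro ⟨c, rfl, h⟩; exact h
  have hmeas : ∀ b : Fin n, MeasurableSet (({b} : Set (Fin n)) ×ˢ {x | (b, x) ∈ S}) :=
    fun b => (measurableSet_singleton b).prod
      (show MeasurableSet {x | (b, x) ∈ S} from hS.preimage measurable_prodMk_left)
  have hdisj : Pairwise (Function.onFun Disjoint
      (fun b : Fin n => ({b} : Set (Fin n)) ×ˢ {x | (b, x) ∈ S})) := by
    intro b c hbc
    simp only [Function.onFun]
    rw [Set.disjoint_left]
    rintro ⟨b', x'⟩ ⟨hb1, _⟩ ⟨hb2, _⟩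
    simp only [Set.mem_singleton_iff] at hb1 hb2
    exact hbc (hb1 ▸ hb2 ▸ rfl)
  conv_lhs => rw [hdec]
  rw [measure_iUnion hdisj hmeas]
  exact tsum_fintype _

lemma measure_fin_prod_ext {ν₁ ν₂ : Measure (Fin n × X)}
    (h : ∀ b (A : Set X), MeasurableSet A → ν₁ ({b} ×ˢ A) = ν₂ ({b} ×ˢ A)) : ν₁ = ν₂ := by
  apply Measure.ext
  intro S hS
  rw [measure_prod_decomp ν₁ hS, measure_prod_decomp ν₂ hS]
  exact Finset.sum_congr rfl (fun b _ => h b _ (hS.preimage measurable_prodMk_left))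

lemma swap_compProd_apply (μX : Measure X) [SFinite μX] (κ : Kernel X (Fin n))
    [IsSFiniteKernel κ] (b : Fin n) {A : Set X} (hA : MeasurableSet A) :
    ((μX.compProd κ).map Prod.swap) ({b} ×ˢ A) = ∫⁻ x in A, κ x {b} ∂μX := by
  rw [Measure.map_apply measurable_swap ((measurableSet_singleton b).prod hA)]
  have hpre : Prod.swap ⁻¹' (({b} : Set (Fin n)) ×ˢ A) = A ×ˢ ({b} : Set (Fin n)) := by
    ext ⟨x, c⟩
    simp only [Set.mem_preimage, Prod.swap_prod_mk, Set.mem_prod, Set.mem_singleton_iff]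
    tauto
  rw [hpre, Measure.compProd_apply_prod hA (measurableSet_singleton b)]

end DD
end Plumbing
section Construct
open MeasureTheory ProbabilityTheory
namespace DD

variable {J : ℕ} {X : Type*} [MeasurableSpace X]

lemma measurable_f1 : Measurable (fun p : Fin 2 × Fin J × X => (p.1, p.2.2)) :=
  measurable_fst.prodMk (measurable_snd.comp measurable_snd)

lemma measurable_f0 : Measurable (fun p : Fin 2 × Fin J × X => (p.2.1, p.2.2)) :=
  (measurable_fst.comp measurable_snd).prodMk (measurable_snd.comp measurable_snd)

lemma construct_mu (μX : Measure X) [IsProbabilityMeasure μX]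
    (κ1 : Kernel X (Fin 2)) [IsMarkovKernel κ1] (κ0 : Kernel X (Fin J)) [IsMarkovKernel κ0]
    (μ1X : Measure (Fin 2 × X)) (μ0X : Measure (Fin J × X))
    (hκ1 : (μX.compProd κ1).map Prod.swap = μ1X)
    (hκ0 : (μX.compProd κ0).map Prod.swap = μ0X)
    (r : Fin J → X → ℝ) (hrm : ∀ j, Measurable (r j)) (hr0 : ∀ j x, 0 ≤ r j x)
    (hrq : ∀ j x, r j x ≤ qx κ0 j x) (hrs : ∀ x, ∑ j, r j x = px κ1 x) :
    ∃ μ ∈ MSet μ1X μ0X, ∀ j : Fin J,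
      μ {p : Fin 2 × Fin J × X | p.2.1 = j} = μ0X {q : Fin J × X | q.1 = j} ∧
      μ {p : Fin 2 × Fin J × X | p.1 = 1 ∧ p.2.1 = j} = ENNReal.ofReal (∫ x, r j x ∂μX) := by
  classical
  have h0X : IsProbabilityMeasure μ0X := by
    rw [← hκ0]; exact Measure.isProbabilityMeasure_map measurable_swap.aemeasurable
  have hmb : ∀ (b : Fin 2) (j : Fin J),
      Measurable (fun x : X => ((b, j, x) : Fin 2 × Fin J × X)) :=
    fun b j => measurable_const.prodMk (measurable_const.prodMk measurable_id)
  have hdm1 : ∀ j, Measurable (fun x => ENNReal.ofReal (r j x)) :=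
    fun j => (hrm j).ennreal_ofReal
  have hdm0 : ∀ j, Measurable (fun x => ENNReal.ofReal (qx κ0 j x - r j x)) :=
    fun j => ((measurable_qx κ0 j).sub (hrm j)).ennreal_ofReal
  set μ : Measure (Fin 2 × Fin J × X) := ∑ j : Fin J,
    ((μX.withDensity (fun x => ENNReal.ofReal (r j x))).map (fun x => ((1 : Fin 2), j, x))
      + (μX.withDensity (fun x => ENNReal.ofReal (qx κ0 j x - r j x))).map
          (fun x => ((0 : Fin 2), j, x))) with hμ_def
  have happ : ∀ S : Set (Fin 2 × Fin J × X), MeasurableSet S →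
      μ S = ∑ j : Fin J, ((∫⁻ x in {x | ((1 : Fin 2), j, x) ∈ S}, ENNReal.ofReal (r j x) ∂μX)
        + ∫⁻ x in {x | ((0 : Fin 2), j, x) ∈ S}, ENNReal.ofReal (qx κ0 j x - r j x) ∂μX) := by
    intro S hS
    rw [hμ_def, Measure.finset_sum_apply]
    refine Finset.sum_congr rfl (fun j _ => ?_)
    rw [Measure.add_apply]
    rw [Measure.map_apply (hmb 1 j) hS, Measure.map_apply (hmb 0 j) hS]
    rw [withDensity_apply _ (hS.preimage (hmb 1 j)), withDensity_apply _ (hS.preimage (hmb 0 j))]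
    rfl
  -- first marginal
  have hmarg1 : μ.map (fun p => (p.1, p.2.2)) = μ1X := by
    apply measure_fin_prod_ext
    intro b A hA
    rw [Measure.map_apply measurable_f1 ((measurableSet_singleton b).prod hA)]
    rw [happ _ (((measurableSet_singleton b).prod hA).preimage measurable_f1)]
    rw [← hκ1, swap_compProd_apply μX κ1 b hA]
    fin_cases b
    · -- b = 0
      simp only [Fin.zero_eta]
      have hs1 : ∀ j : Fin J, {x | ((1 : Fin 2), j, x) ∈
          (fun p : Fin 2 × Fin J × X => (p.1, p.2.2)) ⁻¹' (({0} : Set (Fin 2)) ×ˢ A)} = ∅ := by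
        intro j; ext x
        simp [Set.mem_preimage, Set.mem_prod]
      have hs0 : ∀ j : Fin J, {x | ((0 : Fin 2), j, x) ∈
          (fun p : Fin 2 × Fin J × X => (p.1, p.2.2)) ⁻¹' (({0} : Set (Fin 2)) ×ˢ A)} = A := by
        intro j; ext x
        simp [Set.mem_preimage, Set.mem_prod]
      simp only [hs1, hs0, Measure.restrict_empty, lintegral_zero_measure, zero_add]
      rw [← lintegral_finset_sum _ (fun j _ => hdm0 j)]
      apply setLIntegral_congr_fun hA
      intro x _
      dsimp only
      have hsum : ∑ j, (qx κ0 j x - r j x) = 1 - px κ1 x := by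
        rw [Finset.sum_sub_distrib, qx_sum, hrs]
      rw [← ENNReal.ofReal_sum_of_nonneg (fun j _ => by linarith [hrq j x]), hsum]
      rw [m1_zero (κ1 x)]
      rw [ENNReal.ofReal_sub _ (px_nonneg κ1 x), ENNReal.ofReal_one]
      congr 1
      exact ENNReal.ofReal_toReal (measure_ne_top _ _)
    · -- b = 1
      simp only [Fin.mk_one]
      have hs1 : ∀ j : Fin J, {x | ((1 : Fin 2), j, x) ∈
          (fun p : Fin 2 × Fin J × X => (p.1, p.2.2)) ⁻¹' (({1} : Set (Fin 2)) ×ˢ A)} = A := by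
        intro j; ext x
        simp [Set.mem_preimage, Set.mem_prod]
      have hs0 : ∀ j : Fin J, {x | ((0 : Fin 2), j, x) ∈
          (fun p : Fin 2 × Fin J × X => (p.1, p.2.2)) ⁻¹' (({1} : Set (Fin 2)) ×ˢ A)} = ∅ := by
        intro j; ext x
        simp [Set.mem_preimage, Set.mem_prod]
      simp only [hs1, hs0, Measure.restrict_empty, lintegral_zero_measure, add_zero]
      rw [← lintegral_finset_sum _ (fun j _ => hdm1 j)]
      apply setLIntegral_congr_fun hA
      intro x _
      dsimp only
      rw [← ENNReal.ofReal_sum_of_nonneg (fun j _ => hr0 j x), hrs]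
      exact ENNReal.ofReal_toReal (measure_ne_top _ _)
  -- second marginal
  have hmarg0 : μ.map (fun p => (p.2.1, p.2.2)) = μ0X := by
    apply measure_fin_prod_ext
    intro i A hA
    rw [Measure.map_apply measurable_f0 ((measurableSet_singleton i).prod hA)]
    rw [happ _ (((measurableSet_singleton i).prod hA).preimage measurable_f0)]
    rw [← hκ0, swap_compProd_apply μX κ0 i hA]
    rw [Finset.sum_eq_single_of_mem i (Finset.mem_univ i)]
    · have hs1 : {x | ((1 : Fin 2), i, x) ∈
          (fun p : Fin 2 × Fin J × X => (p.2.1, p.2.2)) ⁻¹' (({i} : Set (Fin J)) ×ˢ A)} = A := by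
        ext x; simp [Set.mem_preimage, Set.mem_prod]
      have hs0 : {x | ((0 : Fin 2), i, x) ∈
          (fun p : Fin 2 × Fin J × X => (p.2.1, p.2.2)) ⁻¹' (({i} : Set (Fin J)) ×ˢ A)} = A := by
        ext x; simp [Set.mem_preimage, Set.mem_prod]
      rw [hs1, hs0, ← lintegral_add_left (hdm1 i)]
      apply setLIntegral_congr_fun hA
      intro x _
      dsimp only
      rw [← ENNReal.ofReal_add (hr0 i x) (by linarith [hrq i x])]
      rw [show r i x + (qx κ0 i x - r i x) = qx κ0 i x by ring]
      exact ENNReal.ofReal_toReal (measure_ne_top _ _)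
    · intro j _ hji
      have hs1 : {x | ((1 : Fin 2), j, x) ∈
          (fun p : Fin 2 × Fin J × X => (p.2.1, p.2.2)) ⁻¹' (({i} : Set (Fin J)) ×ˢ A)} = ∅ := by
        ext x; simp only [Set.mem_preimage, Set.mem_prod, Set.mem_singleton_iff,
          Set.mem_empty_iff_false, iff_false, Set.mem_setOf_eq, not_and]
        exact fun h _ => hji h
      have hs0 : {x | ((0 : Fin 2), j, x) ∈
          (fun p : Fin 2 × Fin J × X => (p.2.1, p.2.2)) ⁻¹' (({i} : Set (Fin J)) ×ˢ A)} = ∅ := by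
        ext x; simp only [Set.mem_preimage, Set.mem_prod, Set.mem_singleton_iff,
          Set.mem_empty_iff_false, iff_false, Set.mem_setOf_eq, not_and]
        exact fun h _ => hji h
      rw [hs1, hs0]
      simp
  -- probability
  have hprob : IsProbabilityMeasure μ := by
    constructor
    have : μ Set.univ = (μ.map (fun p => (p.2.1, p.2.2))) Set.univ := by
      rw [Measure.map_apply measurable_f0 MeasurableSet.univ]
      rfl
    rw [this, hmarg0]
    exact measure_univ
  refine ⟨μ, ⟨hprob, hmarg1, hmarg0⟩, fun j => ⟨?_, ?_⟩⟩
  · -- y0 marginal set value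
    have hset : {p : Fin 2 × Fin J × X | p.2.1 = j}
        = (fun p : Fin 2 × Fin J × X => (p.2.1, p.2.2)) ⁻¹' (({j} : Set (Fin J)) ×ˢ Set.univ) := by
      ext p
      simp only [Set.mem_setOf_eq, Set.mem_preimage, Set.mem_prod, Set.mem_singleton_iff,
        Set.mem_univ, and_true]
    have hset' : ({j} : Set (Fin J)) ×ˢ (Set.univ : Set X) = {q : Fin J × X | q.1 = j} := by
      ext q
      simp only [Set.mem_setOf_eq, Set.mem_prod, Set.mem_singleton_iff, Set.mem_univ, and_true]
    rw [hset, ← Measure.map_apply measurable_f0 ((measurableSet_singleton j).prod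
      MeasurableSet.univ), hmarg0, hset']
  · -- joint value
    have hS : MeasurableSet {p : Fin 2 × Fin J × X | p.1 = 1 ∧ p.2.1 = j} := by
      have : {p : Fin 2 × Fin J × X | p.1 = 1 ∧ p.2.1 = j}
          = ({1} : Set (Fin 2)) ×ˢ (({j} : Set (Fin J)) ×ˢ Set.univ) := by
        ext p
        simp only [Set.mem_setOf_eq, Set.mem_prod, Set.mem_singleton_iff, Set.mem_univ, and_true]
      rw [this]
      exact (measurableSet_singleton _).prod ((measurableSet_singleton _).prod
        MeasurableSet.univ)
    rw [happ _ hS]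
    rw [Finset.sum_eq_single_of_mem j (Finset.mem_univ j)]
    · have hs1 : {x | ((1 : Fin 2), j, x) ∈ {p : Fin 2 × Fin J × X | p.1 = 1 ∧ p.2.1 = j}}
          = Set.univ := by ext x; simp
      have hs0 : {x | ((0 : Fin 2), j, x) ∈ {p : Fin 2 × Fin J × X | p.1 = 1 ∧ p.2.1 = j}}
          = ∅ := by ext x; simp
      rw [hs1, hs0]
      simp only [Measure.restrict_empty, lintegral_zero_measure, add_zero,
        Measure.restrict_univ]
      rw [← ofReal_integral_eq_lintegral_ofReal]
      · refine Integrable.mono' (integrable_const (1:ℝ)) (hrm j).aestronglyMeasurable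
          (Filter.Eventually.of_forall (fun x => ?_))
        rw [Real.norm_eq_abs, abs_le]
        exact ⟨by linarith [hr0 j x], le_trans (hrq j x) (qx_le_one κ0 j x)⟩
      · exact Filter.Eventually.of_forall (fun x => hr0 j x)
    · intro i _ hij
      have hs1 : {x | ((1 : Fin 2), i, x) ∈ {p : Fin 2 × Fin J × X | p.1 = 1 ∧ p.2.1 = j}}
          = ∅ := by
        ext x
        simp only [Set.mem_setOf_eq, Set.mem_empty_iff_false, iff_false, not_and]
        exact fun _ => hij
      have hs0 : {x | ((0 : Fin 2), i, x) ∈ {p : Fin 2 × Fin J × X | p.1 = 1 ∧ p.2.1 = j}}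
          = ∅ := by
        ext x
        simp only [Set.mem_setOf_eq, Set.mem_empty_iff_false, iff_false, not_and]
        exact fun h => absurd h (by decide)
      rw [hs1, hs0]
      simp

end DD
end Construct
section Forward
open MeasureTheory ProbabilityTheory
open scoped ENNReal
namespace DD

variable {J : ℕ} {X : Type*} [MeasurableSpace X]

lemma forward_dir (μX : Measure X) [IsProbabilityMeasure μX]
    (κ1 : Kernel X (Fin 2)) [IsMarkovKernel κ1] (κ0 : Kernel X (Fin J)) [IsMarkovKernel κ0]
    (μ1X : Measure (Fin 2 × X)) (μ0X : Measure (Fin J × X))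
    (hκ1 : (μX.compProd κ1).map Prod.swap = μ1X)
    (hκ0 : (μX.compProd κ0).map Prod.swap = μ0X)
    (θ : Fin J → ℝ)
    (μ : Measure (Fin 2 × Fin J × X)) (hμ : μ ∈ MSet μ1X μ0X)
    (hmom : ∀ j : Fin J,
      θ j * (μ {p : Fin 2 × Fin J × X | p.2.1 = j}).toReal =
        (μ {p : Fin 2 × Fin J × X | p.1 = 1 ∧ p.2.1 = j}).toReal)
    (t : Fin J → ℝ) (τ : Equiv.Perm (Fin J)) (hmono : Monotone (t ∘ τ)) :
    ∑ j, t j * θ j * (μ0X {q : Fin J × X | q.1 = j}).toReal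
      ≤ ∑ j, t j * ∫ x, vx κ1 κ0 τ j x ∂μX := by
  classical
  obtain ⟨hprob, h1, h0⟩ := hμ
  have hf22 : Measurable (fun p : Fin 2 × Fin J × X => p.2.2) :=
    measurable_snd.comp measurable_snd
  set ρ : Fin J → Measure X := fun j =>
    (μ.restrict ((({1} : Set (Fin 2))) ×ˢ (({j} : Set (Fin J)) ×ˢ Set.univ))).map
      (fun p => p.2.2) with hρ_def
  have hρ_apply : ∀ (j : Fin J) (A : Set X), MeasurableSet A →
      ρ j A = μ (({1} : Set (Fin 2)) ×ˢ (({j} : Set (Fin J)) ×ˢ A)) := by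
    intro j A hA
    rw [hρ_def]
    rw [Measure.map_apply hf22 hA]
    rw [Measure.restrict_apply (hA.preimage hf22)]
    congr 1
    ext ⟨b, j', x⟩
    simp only [Set.mem_inter_iff, Set.mem_preimage, Set.mem_prod, Set.mem_singleton_iff,
      Set.mem_univ, and_true]
    tauto
  -- upper bound by the q-marginal
  have hρ_le : ∀ (j : Fin J) (A : Set X), MeasurableSet A →
      ρ j A ≤ ∫⁻ x in A, κ0 x {j} ∂μX := by
    intro j A hA
    rw [hρ_apply j A hA]
    have hsub : (({1} : Set (Fin 2)) ×ˢ (({j} : Set (Fin J)) ×ˢ A))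
        ⊆ (fun p : Fin 2 × Fin J × X => (p.2.1, p.2.2)) ⁻¹' (({j} : Set (Fin J)) ×ˢ A) := by
      rintro ⟨b, j', x⟩ ⟨_, hj, hx⟩
      exact ⟨hj, hx⟩
    calc μ (({1} : Set (Fin 2)) ×ˢ (({j} : Set (Fin J)) ×ˢ A))
        ≤ μ ((fun p : Fin 2 × Fin J × X => (p.2.1, p.2.2)) ⁻¹' (({j} : Set (Fin J)) ×ˢ A)) :=
          measure_mono hsub
      _ = μ0X (({j} : Set (Fin J)) ×ˢ A) := by
          rw [← Measure.map_apply measurable_f0 ((measurableSet_singleton j).prod hA), h0]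
      _ = ∫⁻ x in A, κ0 x {j} ∂μX := by rw [← hκ0, swap_compProd_apply μX κ0 j hA]
  -- sum identity
  have hρ_sum : ∀ (A : Set X), MeasurableSet A →
      ∑ j, ρ j A = ∫⁻ x in A, κ1 x {1} ∂μX := by
    intro A hA
    have hdec : (fun p : Fin 2 × Fin J × X => (p.1, p.2.2)) ⁻¹' (({1} : Set (Fin 2)) ×ˢ A)
        = ⋃ j : Fin J, (({1} : Set (Fin 2)) ×ˢ (({j} : Set (Fin J)) ×ˢ A)) := by
      ext ⟨b, j', x⟩
      simp only [Set.mem_preimage, Set.mem_prod, Set.mem_singleton_iff, Set.mem_iUnion]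
      constructor
      · rintro ⟨hb, hx⟩; exact ⟨j', hb, rfl, hx⟩
      · rintro ⟨j, hb, hj, hx⟩; exact ⟨hb, hx⟩
    have hmeasj : ∀ j : Fin J,
        MeasurableSet ((({1} : Set (Fin 2))) ×ˢ (({j} : Set (Fin J)) ×ˢ A)) :=
      fun j => (measurableSet_singleton _).prod ((measurableSet_singleton _).prod hA)
    have hdisj : Pairwise (Function.onFun Disjoint
        (fun j : Fin J => (({1} : Set (Fin 2))) ×ˢ (({j} : Set (Fin J)) ×ˢ A))) := by
      intro j j' hjj
      rw [Function.onFun, Set.disjoint_left]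
      rintro ⟨b, i, x⟩ ⟨_, hi1, _⟩ ⟨_, hi2, _⟩
      simp only [Set.mem_singleton_iff] at hi1 hi2
      exact hjj (hi1 ▸ hi2 ▸ rfl)
    calc ∑ j, ρ j A = ∑ j, μ (({1} : Set (Fin 2)) ×ˢ (({j} : Set (Fin J)) ×ˢ A)) :=
          Finset.sum_congr rfl (fun j _ => hρ_apply j A hA)
      _ = ∑' j, μ (({1} : Set (Fin 2)) ×ˢ (({j} : Set (Fin J)) ×ˢ A)) := (tsum_fintype _).symm
      _ = μ (⋃ j : Fin J, (({1} : Set (Fin 2)) ×ˢ (({j} : Set (Fin J)) ×ˢ A))) :=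
          (measure_iUnion hdisj hmeasj).symm
      _ = μ ((fun p : Fin 2 × Fin J × X => (p.1, p.2.2)) ⁻¹' (({1} : Set (Fin 2)) ×ˢ A)) := by
          rw [hdec]
      _ = μ1X (({1} : Set (Fin 2)) ×ˢ A) := by
          rw [← Measure.map_apply measurable_f1 ((measurableSet_singleton _).prod hA), h1]
      _ = ∫⁻ x in A, κ1 x {1} ∂μX := by rw [← hκ1, swap_compProd_apply μX κ1 1 hA]
  have hρ_fin : ∀ j, IsFiniteMeasure (ρ j) := by
    intro j
    constructor
    rw [hρ_apply j Set.univ MeasurableSet.univ]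
    exact lt_of_le_of_lt (measure_mono (Set.subset_univ _)) (by simp [hprob.measure_univ])
  have hρ_ac : ∀ j, ρ j ≪ μX := by
    intro j
    refine Measure.AbsolutelyContinuous.mk (fun A hA h0' => ?_)
    have := hρ_le j A hA
    rw [setLIntegral_measure_zero A _ h0'] at this
    exact le_antisymm this zero_le
  set g : Fin J → X → ℝ≥0∞ := fun j => (ρ j).rnDeriv μX with hg_def
  have hg_meas : ∀ j, Measurable (g j) := fun j => Measure.measurable_rnDeriv _ _
  have hwd : ∀ j, μX.withDensity (g j) = ρ j := by
    intro j
    haveI := hρ_fin j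
    exact Measure.withDensity_rnDeriv_eq _ _ (hρ_ac j)
  have hsl : ∀ (j : Fin J) (A : Set X), MeasurableSet A → ∫⁻ x in A, g j x ∂μX = ρ j A := by
    intro j A hA
    rw [← withDensity_apply _ hA, hwd j]
  have hgle : ∀ j, g j ≤ᵐ[μX] fun x => κ0 x {j} := by
    intro j
    refine ae_le_of_forall_setLIntegral_le_of_sigmaFinite (hg_meas j) (fun s hs _ => ?_)
    rw [hsl j s hs]
    exact hρ_le j s hs
  have hgsum : (fun x => ∑ j, g j x) =ᵐ[μX] fun x => κ1 x {1} := by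
    refine ae_eq_of_forall_setLIntegral_eq_of_sigmaFinite₀
      (Finset.measurable_sum _ (fun j _ => hg_meas j)).aemeasurable
      (Kernel.measurable_coe κ1 (measurableSet_singleton 1)).aemeasurable (fun s hs _ => ?_)
    rw [lintegral_finset_sum _ (fun j _ => hg_meas j)]
    rw [Finset.sum_congr rfl (fun j _ => hsl j s hs)]
    exact hρ_sum s hs
  set rr : Fin J → X → ℝ := fun j x => (g j x).toReal with hrr_def
  have hrr_meas : ∀ j, Measurable (rr j) := fun j => (hg_meas j).ennreal_toReal
  -- the good event
  have hgood : ∀ᵐ x ∂μX, (∀ j, g j x ≤ κ0 x {j}) ∧ ∑ j, g j x = κ1 x {1} := by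
    refine Filter.Eventually.and ?_ hgsum
    rw [MeasureTheory.ae_all_iff]
    exact hgle
  have hptwise : ∀ᵐ x ∂μX, ∑ j, t j * rr j x ≤ ∑ j, t j * vx κ1 κ0 τ j x := by
    filter_upwards [hgood] with x hx
    obtain ⟨hle, hsum⟩ := hx
    have hfin : ∀ j, g j x ≠ ⊤ := fun j => ne_top_of_le_ne_top (measure_ne_top _ _) (hle j)
    have hr0 : ∀ j, 0 ≤ rr j x := fun j => ENNReal.toReal_nonneg
    have hrq : ∀ j, rr j x ≤ qx κ0 j x :=
      fun j => ENNReal.toReal_mono (measure_ne_top _ _) (hle j)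
    have hrs : ∑ j, rr j x = px κ1 x := by
      rw [hrr_def]
      simp only
      rw [← ENNReal.toReal_sum (fun j _ => hfin j), hsum]
      rfl
    have := greedy_max t (fun j => qx κ0 j x) (fun j => rr j x) τ hmono (px κ1 x)
      (px_nonneg κ1 x) (px_le_one κ1 x) (fun j => qx_nonneg κ0 j x) (qx_sum κ0 x)
      hr0 hrq hrs
    rw [G_eq κ1 κ0 t τ x] at this
    exact this
  have hrr_int : ∀ j, Integrable (rr j) μX := by
    intro j
    refine Integrable.mono' (integrable_const (1:ℝ)) (hrr_meas j).aestronglyMeasurable ?_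
    filter_upwards [hgle j] with x hx
    rw [Real.norm_eq_abs, abs_le]
    refine ⟨by linarith [ENNReal.toReal_nonneg (a := g j x)], ?_⟩
    exact le_trans (ENNReal.toReal_mono (measure_ne_top _ _) hx) (qx_le_one κ0 j x)
  -- value of the integral of rr
  have hval : ∀ j, ∫ x, rr j x ∂μX = θ j * (μ0X {q : Fin J × X | q.1 = j}).toReal := by
    intro j
    have h1' : ∫ x, rr j x ∂μX = (∫⁻ x, g j x ∂μX).toReal := by
      rw [integral_toReal (hg_meas j).aemeasurable]
      filter_upwards [hgle j] with x hx
      exact lt_of_le_of_lt hx (measure_lt_top _ _)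
    have h2' : ∫⁻ x, g j x ∂μX = ρ j Set.univ := by
      rw [← setLIntegral_univ, hsl j Set.univ MeasurableSet.univ]
    have h3' : ρ j Set.univ = μ {p : Fin 2 × Fin J × X | p.1 = 1 ∧ p.2.1 = j} := by
      rw [hρ_apply j Set.univ MeasurableSet.univ]
      congr 1
      ext ⟨b, j', x⟩
      simp only [Set.mem_prod, Set.mem_singleton_iff, Set.mem_univ, and_true, Set.mem_setOf_eq]
    have h4' : μ {p : Fin 2 × Fin J × X | p.2.1 = j} = μ0X {q : Fin J × X | q.1 = j} := by
      have hset : {p : Fin 2 × Fin J × X | p.2.1 = j}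
          = (fun p : Fin 2 × Fin J × X => (p.2.1, p.2.2)) ⁻¹' (({j} : Set (Fin J)) ×ˢ Set.univ) := by
        ext p
        simp only [Set.mem_setOf_eq, Set.mem_preimage, Set.mem_prod, Set.mem_singleton_iff,
          Set.mem_univ, and_true]
      have hset' : ({j} : Set (Fin J)) ×ˢ (Set.univ : Set X) = {q : Fin J × X | q.1 = j} := by
        ext q
        simp only [Set.mem_setOf_eq, Set.mem_prod, Set.mem_singleton_iff, Set.mem_univ, and_true]
      rw [hset, ← Measure.map_apply measurable_f0 ((measurableSet_singleton j).prod
        MeasurableSet.univ), h0, hset']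
    rw [h1', h2', h3', ← hmom j, h4']
  calc ∑ j, t j * θ j * (μ0X {q : Fin J × X | q.1 = j}).toReal
      = ∑ j, t j * ∫ x, rr j x ∂μX := by
        refine Finset.sum_congr rfl (fun j _ => ?_)
        rw [hval j]; ring
    _ = ∫ x, ∑ j, t j * rr j x ∂μX := by
        rw [integral_finset_sum _ (fun j _ => (hrr_int j).const_mul (t j))]
        exact Finset.sum_congr rfl (fun j _ => (integral_const_mul _ _).symm)
    _ ≤ ∫ x, ∑ j, t j * vx κ1 κ0 τ j x ∂μX := by
        refine integral_mono_ae
          (MeasureTheory.integrable_finset_sum _ (fun j _ => (hrr_int j).const_mul (t j)))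
          (MeasureTheory.integrable_finset_sum _
            (fun j _ => (integrable_vx κ1 κ0 μX τ j).const_mul (t j)))
          hptwise
    _ = ∑ j, t j * ∫ x, vx κ1 κ0 τ j x ∂μX := by
        rw [integral_finset_sum _ (fun j _ => (integrable_vx κ1 κ0 μX τ j).const_mul (t j))]
        exact Finset.sum_congr rfl (fun j _ => integral_const_mul _ _)

end DD
end Forward
section FinalHelpers
open MeasureTheory ProbabilityTheory
open scoped RealInnerProductSpace ENNReal
namespace DD

lemma euclid_sum_apply {J : ℕ} {ι : Type*} (F : Finset ι) (c : ι → ℝ)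
    (v : ι → EuclideanSpace ℝ (Fin J)) (j : Fin J) :
    (∑ y ∈ F, c y • v y) j = ∑ y ∈ F, c y * (v y j) := by
  classical
  induction F using Finset.induction_on with
  | empty => simp
  | insert _ _ ha ih =>
    rw [Finset.sum_insert ha, Finset.sum_insert ha, ← ih]
    rfl

lemma euclid_inner_eq {J : ℕ} (a b : EuclideanSpace ℝ (Fin J)) :
    ⟪a, b⟫ = ∑ j, a j * b j := by
  rw [PiLp.inner_apply]
  simp [RCLike.inner_apply, conj_trivial, mul_comm]


end DD
end FinalHelpers
end Aux

/-- Proposition 5: the identified set of the within-class approval probabilities in the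
demographic-disparity model.  Here the binary decision takes values in `Fin 2` (`1` = approval)
and the protected attribute takes values in `Fin J`.  The vector `θ ∈ [0,1]^J` satisfies the
moment conditions `θ_j μ(y0 = a_j) = μ(y1 = 1, y0 = a_j)` for some `μ ∈ M(μ1X, μ0X)` iff for
every `t` on the unit sphere of `ℝ^J`,
`∑_j t_j θ_j μ0X({a_j} × X) ≤ ∫ ∫₀¹ F⁻¹_{D∣x}(u) F⁻¹_{D_t∣x}(u) du dμX`. -/
theorem demographic_disparity_identified_set
    {J : ℕ} {X : Type*} [MeasurableSpace X] [StandardBorelSpace X]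
    (μX : Measure X) [IsProbabilityMeasure μX]
    (κ1 : Kernel X (Fin 2)) [IsMarkovKernel κ1]
    (κ0 : Kernel X (Fin J)) [IsMarkovKernel κ0]
    (μ1X : Measure (Fin 2 × X)) (μ0X : Measure (Fin J × X))
    (hκ1 : (μX.compProd κ1).map Prod.swap = μ1X)
    (hκ0 : (μX.compProd κ0).map Prod.swap = μ0X)
    (θ : EuclideanSpace ℝ (Fin J)) (hθ : ∀ j, θ j ∈ Set.Icc (0:ℝ) 1) :
    (∃ μ ∈ MSet μ1X μ0X, ∀ j : Fin J,
        θ j * (μ {p : Fin 2 × Fin J × X | p.2.1 = j}).toReal =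
          (μ {p : Fin 2 × Fin J × X | p.1 = 1 ∧ p.2.1 = j}).toReal) ↔
      ∀ t : EuclideanSpace ℝ (Fin J), ‖t‖ = 1 →
        (∑ j : Fin J, t j * θ j * (μ0X {q : Fin J × X | q.1 = j}).toReal) ≤
          ∫ x, ∫ u in Set.Ioo (0:ℝ) 1,
            quantile ((κ1 x).map (fun y1 : Fin 2 => if y1 = 1 then (1:ℝ) else 0)) u *
              quantile ((κ0 x).map (fun j : Fin J => t j)) u ∂volume ∂μX := by
  classical
  constructor
  · rintro ⟨μ, hμ, hmom⟩ t ht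
    rw [DD.integral_inner_eq κ1 κ0 μX (fun j => t j) (Tuple.sort (fun j => t j))
      (Tuple.monotone_sort (fun j => t j))]
    exact DD.forward_dir μX κ1 κ0 μ1X μ0X hκ1 hκ0 (fun j => θ j) μ hμ hmom (fun j => t j) _
      (Tuple.monotone_sort (fun j => t j))
  · intro h
    set m : Fin J → ℝ := fun j => (μ0X {q : Fin J × X | q.1 = j}).toReal with hm_def
    set Vv : Equiv.Perm (Fin J) → EuclideanSpace ℝ (Fin J) :=
      fun τ => (WithLp.equiv 2 (Fin J → ℝ)).symm (fun j => ∫ x, DD.vx κ1 κ0 τ j x ∂μX)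
      with hVv_def
    set w : EuclideanSpace ℝ (Fin J) :=
      (WithLp.equiv 2 (Fin J → ℝ)).symm (fun j => θ j * m j) with hw_def
    have hVv_app : ∀ τ j, Vv τ j = ∫ x, DD.vx κ1 κ0 τ j x ∂μX := fun τ j => rfl
    have hw_app : ∀ j, w j = θ j * m j := fun j => rfl
    set s : Finset (EuclideanSpace ℝ (Fin J)) := Finset.image Vv Finset.univ with hs_def
    have hmem_s : ∀ τ, Vv τ ∈ s := fun τ => Finset.mem_image_of_mem Vv (Finset.mem_univ τ)
    have hw_mem : w ∈ convexHull ℝ (↑s : Set (EuclideanSpace ℝ (Fin J))) := by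
      by_contra hnot
      obtain ⟨f, u, hfs, hfw⟩ := geometric_hahn_banach_closed_point
        (convex_convexHull ℝ _) (s.finite_toSet.isClosed_convexHull ℝ) hnot
      set tv := (InnerProductSpace.toDual ℝ (EuclideanSpace ℝ (Fin J))).symm f with htv_def
      have htv : ∀ y, ⟪tv, y⟫ = f y := fun y => InnerProductSpace.toDual_symm_apply
      have hVvmem : ∀ τ, Vv τ ∈ convexHull ℝ (↑s : Set (EuclideanSpace ℝ (Fin J))) :=
        fun τ => subset_convexHull ℝ _ (hmem_s τ)
      have htv0 : tv ≠ 0 := by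
        intro h0
        have h1 : f (Vv 1) < u := hfs _ (hVvmem 1)
        have h2 : u < f w := hfw
        have hz1 : f (Vv 1) = 0 := by rw [← htv (Vv 1), h0, inner_zero_left]
        have hz2 : f w = 0 := by rw [← htv w, h0, inner_zero_left]
        rw [hz1] at h1; rw [hz2] at h2; linarith
      have hnorm : 0 < ‖tv‖ := norm_pos_iff.mpr htv0
      set nt : EuclideanSpace ℝ (Fin J) := ‖tv‖⁻¹ • tv with hnt_def
      have hnt : ‖nt‖ = 1 := norm_smul_inv_norm htv0
      have hnt_app : ∀ j, nt j = ‖tv‖⁻¹ * tv j := fun j => rfl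
      have hco : ∀ y : EuclideanSpace ℝ (Fin J), ⟪tv, y⟫ = ‖tv‖ * ∑ j, nt j * y j := by
        intro y
        rw [DD.euclid_inner_eq, Finset.mul_sum]
        refine Finset.sum_congr rfl (fun j _ => ?_)
        rw [hnt_app j]
        field_simp
      have hkey := h nt hnt
      rw [DD.integral_inner_eq κ1 κ0 μX (fun j => nt j) (Tuple.sort (fun j => nt j))
        (Tuple.monotone_sort (fun j => nt j))] at hkey
      have hfw' : f w ≤ f (Vv (Tuple.sort (fun j => nt j))) := by
        rw [← htv w, ← htv (Vv (Tuple.sort (fun j => nt j))), hco w, hco _]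
        apply mul_le_mul_of_nonneg_left _ (norm_nonneg tv)
        calc ∑ j, nt j * w j = ∑ j : Fin J, nt j * θ j * m j := by
              refine Finset.sum_congr rfl (fun j _ => ?_)
              rw [hw_app j]; ring
          _ ≤ ∑ j, nt j * ∫ x, DD.vx κ1 κ0 (Tuple.sort (fun j => nt j)) j x ∂μX := hkey
          _ = ∑ j, nt j * (Vv (Tuple.sort (fun j => nt j))) j := by
              refine Finset.sum_congr rfl (fun j _ => ?_)
              rw [hVv_app]
      have hlt : f (Vv (Tuple.sort (fun j => nt j))) < u := hfs _ (hVvmem _)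
      linarith
    rw [Finset.mem_convexHull'] at hw_mem
    obtain ⟨W, hW0, hW1, hWsum⟩ := hw_mem
    set pck : EuclideanSpace ℝ (Fin J) → Equiv.Perm (Fin J) := fun y =>
      if hy : ∃ τ, Vv τ = y then Classical.choose hy else 1 with hpck_def
    have hpck : ∀ y ∈ s, Vv (pck y) = y := by
      intro y hy
      rw [hs_def, Finset.mem_image] at hy
      obtain ⟨τ, _, hτ⟩ := hy
      have hex : ∃ τ, Vv τ = y := ⟨τ, hτ⟩
      simp only [hpck_def, dif_pos hex]
      exact Classical.choose_spec hex
    set r : Fin J → X → ℝ := fun j x => ∑ y ∈ s, W y * DD.vx κ1 κ0 (pck y) j x with hr_def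
    have hrm : ∀ j, Measurable (r j) :=
      fun j => Finset.measurable_sum _ (fun y _ => (DD.measurable_vx κ1 κ0 (pck y) j).const_mul _)
    have hr0 : ∀ j x, 0 ≤ r j x := fun j x =>
      Finset.sum_nonneg (fun y hy => mul_nonneg (hW0 y hy) (DD.vx_nonneg κ1 κ0 (pck y) j x))
    have hrq : ∀ j x, r j x ≤ DD.qx κ0 j x := by
      intro j x
      calc r j x ≤ ∑ y ∈ s, W y * DD.qx κ0 j x :=
            Finset.sum_le_sum (fun y hy =>
              mul_le_mul_of_nonneg_left (DD.vx_le_qx κ1 κ0 (pck y) j x) (hW0 y hy))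
        _ = DD.qx κ0 j x := by rw [← Finset.sum_mul, hW1, one_mul]
    have hrs : ∀ x, ∑ j, r j x = DD.px κ1 x := by
      intro x
      rw [Finset.sum_comm]
      calc ∑ y ∈ s, ∑ j, W y * DD.vx κ1 κ0 (pck y) j x
          = ∑ y ∈ s, W y * DD.px κ1 x := by
            refine Finset.sum_congr rfl (fun y _ => ?_)
            rw [← Finset.mul_sum, DD.vx_sum]
        _ = DD.px κ1 x := by rw [← Finset.sum_mul, hW1, one_mul]
    have hr_int : ∀ j, ∫ x, r j x ∂μX = θ j * m j := by
      intro j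
      have : ∫ x, r j x ∂μX = ∑ y ∈ s, W y * ∫ x, DD.vx κ1 κ0 (pck y) j x ∂μX := by
        rw [hr_def]
        simp only
        rw [integral_finset_sum _
          (fun y _ => (DD.integrable_vx κ1 κ0 μX (pck y) j).const_mul (W y))]
        exact Finset.sum_congr rfl (fun y _ => integral_const_mul _ _)
      rw [this]
      have h2 : ∑ y ∈ s, W y * ∫ x, DD.vx κ1 κ0 (pck y) j x ∂μX = ∑ y ∈ s, W y * y j := by
        refine Finset.sum_congr rfl (fun y hy => ?_)
        rw [← hVv_app (pck y) j, hpck y hy]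
      rw [h2, ← DD.euclid_sum_apply s W (fun y => y) j]
      rw [hWsum]
      exact hw_app j
    obtain ⟨μ, hμMSet, hμj⟩ := DD.construct_mu μX κ1 κ0 μ1X μ0X hκ1 hκ0 r hrm hr0 hrq hrs
    refine ⟨μ, hμMSet, fun j => ?_⟩
    rw [(hμj j).1, (hμj j).2]
    rw [ENNReal.toReal_ofReal (integral_nonneg (fun x => hr0 j x))]
    rw [hr_int j]
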